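/- Let d ∈ (0,1) and define the WENO-M mapping function g(ω) = ω(d + d² − 3dω + ω²)/(d² + (1 − 2d)ω) on a neighborhood of d. Then g is twice differentiable at ω = d with g′(d) = 0 and g″(d) = 0. -/

import Mathlib

/-- For d ∈ (0,1), the WENO-M mapping function
`g(ω) = ω(d + d² − 3dω + ω²)/(d² + (1 − 2d)ω)` is twice differentiable at ω = d
with g′(d) = 0 and g″(d) = 0. -/
theorem wenoM_deriv_at_d (d : ℝ) (hd : d ∈ Set.Ioo (0:ℝ) 1)
    (g : ℝ → ℝ)
    (hg : ∀ ω : ℝ, g ω = ω * (d + d^2 - 3*d*ω + ω^2) / (d^2 + (1 - 2*d)*ω)) :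
    DifferentiableAt ℝ g d ∧ DifferentiableAt ℝ (deriv g) d ∧
    deriv g d = 0 ∧ deriv (deriv g) d = 0 := by
  obtain ⟨hd0, hd1⟩ := hd
  set D : ℝ → ℝ := fun ω => d^2 + (1 - 2*d)*ω with hDdef
  have hDd : D d ≠ 0 := by
    simp only [hDdef]
    nlinarith
  have hDcont : Continuous D := by fun_prop
  have hU : IsOpen {ω : ℝ | D ω ≠ 0} := by
    have : {ω : ℝ | D ω ≠ 0} = D ⁻¹' ({0}ᶜ) := rfl
    rw [this]
    exact isOpen_compl_singleton.preimage hDcont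
  have hmem : {ω : ℝ | D ω ≠ 0} ∈ nhds d := hU.mem_nhds hDd
  set φ : ℝ → ℝ := fun ω => d + (ω - d)^3 / D ω with hφdef
  set h : ℝ → ℝ := fun ω => (3 * D ω - (ω - d)*(1-2*d)) / (D ω)^2 with hhdef
  set ψ : ℝ → ℝ := fun ω => (ω - d)^2 * h ω with hψdef
  have hgφ : g =ᶠ[nhds d] φ := by
    filter_upwards [hmem] with ω hω
    rw [hg ω]
    simp only [hφdef, hDdef] at hω ⊢
    rw [add_div' _ _ _ hω]
    congr 1
    ring
  have hφψ : ∀ ω : ℝ, D ω ≠ 0 → HasDerivAt φ (ψ ω) ω := by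
    intro ω hω
    have h1 : HasDerivAt (fun ω : ℝ => (ω - d)^3) (3*(ω-d)^2) ω := by
      have := ((hasDerivAt_id ω).sub_const d).pow 3
      simpa [Pi.pow_def] using this
    have h2 : HasDerivAt D (1 - 2*d) ω := by
      have := ((hasDerivAt_id ω).const_mul (1-2*d)).const_add (d^2)
      simpa [hDdef] using this
    have h3 : HasDerivAt φ _ ω := (h1.div h2 hω).const_add d
    convert h3 using 1
    simp only [hψdef, hhdef]
    field_simp
  have hgd : HasDerivAt g (ψ d) d := (hφψ d hDd).congr_of_eventuallyEq hgφ
  have hψd0 : ψ d = 0 := by simp [hψdef]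
  have hderiv_eq : deriv g =ᶠ[nhds d] ψ := by
    refine hgφ.deriv.trans ?_
    filter_upwards [hmem] with ω hω
    exact (hφψ ω hω).deriv
  -- second derivative
  have hsq : HasDerivAt (fun ω : ℝ => (ω - d)^2) 0 d := by
    have := ((hasDerivAt_id d).sub_const d).pow 2
    simpa [Pi.pow_def] using this
  have hhdiff : DifferentiableAt ℝ h d := by
    apply DifferentiableAt.div
    · fun_prop
    · fun_prop
    · exact pow_ne_zero 2 hDd
  have hψder : HasDerivAt ψ 0 d := by
    have := hsq.mul hhdiff.hasDerivAt
    simpa [hψdef, Pi.mul_def] using this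
  have hdg : HasDerivAt (deriv g) 0 d := hψder.congr_of_eventuallyEq hderiv_eq
  refine ⟨hgd.differentiableAt, hdg.differentiableAt, ?_, hdg.deriv⟩
  rw [hgd.deriv, hψd0]
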